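/- Let P be a submonoid of a group H and let γ : H → G be a group homomorphism into a group G whose restriction to P is injective. For each word α = (p₁, …, p_{2k}) in P, computing constructible ideals inside H: (1) if γ(α̇) = e in G but α̇ ≠ e in H, then K(α) = ∅; (2) γ(K(α)) = γ(P) ∩ γ(p_{2k}⁻¹p_{2k-1})·γ(P) ∩ γ(p_{2k}⁻¹p_{2k-1}p_{2k-2}⁻¹p_{2k-3})·γ(P) ∩ ⋯ ∩ γ(p_{2k}⁻¹p_{2k-1}p_{2k-2}⁻¹⋯p₂⁻¹p₁)·γ(P); that is, γ(K(α)) equals the constructible ideal of the submonoid γ(P) of G associated with the word (γ(p₁), …, γ(p_{2k})). -/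

import Mathlib

namespace PaperToeplitz

variable {G : Type*} [Group G]

/-- A word `(p₁, p₂, …, p_{2k-1}, p_{2k})` in `P`, encoded as its list of consecutive pairs
`[(p₁,p₂), …, (p_{2k-1},p_{2k})]`. Concatenation of words is list append. -/
abbrev Word (P : Submonoid G) : Type _ := List (P × P)

/-- The generalized left quotient `α̇ := p₁⁻¹ p₂ ⋯ p_{2k-1}⁻¹ p_{2k} ∈ G`.
A word is *neutral* if `α̇ = 1`. -/
def dotProd {P : Submonoid G} (α : Word P) : G :=
  (α.map fun x => ((x.1 : G))⁻¹ * (x.2 : G)).prod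

/-- The reverse word `α̃ := (p_{2k}, p_{2k-1}, …, p₂, p₁)`. -/
def rev {P : Submonoid G} (α : Word P) : Word P :=
  α.reverse.map fun x => (x.2, x.1)

/-- The iterated quotient set
`Q(α) := {e, p_{2k}⁻¹p_{2k-1}, p_{2k}⁻¹p_{2k-1}p_{2k-2}⁻¹p_{2k-3}, …, p_{2k}⁻¹p_{2k-1}⋯p₂⁻¹p₁}`,
realized as the set of prefix products. -/
def Qset {P : Submonoid G} (α : Word P) : Set G :=
  {g | ∃ n : ℕ, ((α.reverse.map fun x => ((x.2 : G))⁻¹ * (x.1 : G)).take n).prod = g}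

/-- The left translate `xP = {xq : q ∈ P}` of `P`, as a subset of `G`. -/
def lcos (P : Submonoid G) (x : G) : Set G := {y : G | x⁻¹ * y ∈ P}

/-- The constructible ideal `K(α) := ⋂_{g ∈ Q(α)} gP` (a subset of `P` since `e ∈ Q(α)`). -/
def Kset {P : Submonoid G} (α : Word P) : Set G :=
  ⋂ g ∈ Qset α, lcos P g

/-- The collection `𝔍(P)` of constructible right ideals of `P`. -/
def CIdeals (P : Submonoid G) : Set (Set G) := {S | ∃ α : Word P, Kset α = S}

end PaperToeplitz

namespace PaperToeplitz

/-- The image of an element of `P` in `P.map γ`. -/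
def memMap {H G : Type*} [Group H] [Group G] {P : Submonoid H} (γ : H →* G) (p : P) :
    P.map γ :=
  ⟨γ p, Submonoid.mem_map_of_mem γ p.2⟩

/-- The image word `(γ(p₁), …, γ(p_{2k}))`, a word in the submonoid `γ(P)` of `G`. -/
def mapWord {H G : Type*} [Group H] [Group G] {P : Submonoid H} (γ : H →* G)
    (α : Word P) : Word (P.map γ) :=
  α.map fun x => (memMap γ x.1, memMap γ x.2)

section
variable {H G : Type*} [Group H] [Group G]

theorem key_ind {P : Submonoid H} (γ : H →* G) (hinj : Set.InjOn γ (P : Set H))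
    (L : List H) (hL : ∀ a ∈ L, ∃ b ∈ P, ∃ c ∈ P, a = b⁻¹ * c)
    (p : H) (hp : p ∈ P)
    (hq : ∀ n : ℕ, γ (((L.take n).prod)⁻¹ * p) ∈ P.map γ) :
    ∀ n : ℕ, ((L.take n).prod)⁻¹ * p ∈ P := by
  intro n
  induction n with
  | zero => simpa using hp
  | succ n ih =>
    by_cases h : n < L.length
    · have hps : (L.take (n+1)).prod = (L.take n).prod * L.get ⟨n, h⟩ :=
        List.prod_take_succ L n h
      obtain ⟨b, hb, c, hc, hbc⟩ := hL (L.get ⟨n, h⟩) (L.get_mem ⟨n, h⟩)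
      have h1 : ((L.take (n+1)).prod)⁻¹ * p
          = c⁻¹ * (b * (((L.take n).prod)⁻¹ * p)) := by
        rw [hps, hbc]; group
      obtain ⟨q, hqP, hqeq⟩ := Submonoid.mem_map.mp (hq (n+1))
      rw [h1] at hqeq
      have h2 : γ (c * q) = γ (b * (((L.take n).prod)⁻¹ * p)) := by
        rw [map_mul, hqeq, ← map_mul]
        congr 1
        group
      have heq : c * q = b * (((L.take n).prod)⁻¹ * p) :=
        hinj (mul_mem hc hqP) (mul_mem hb ih) h2
      have h3 : ((L.take (n+1)).prod)⁻¹ * p = q := by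
        rw [h1, ← heq]; group
      rw [h3]; exact hqP
    · have hle : L.take (n+1) = L.take n := by
        rw [List.take_of_length_le (by omega), List.take_of_length_le (by omega)]
      rw [hle]; exact ih

theorem mem_Kset_iff {P : Submonoid H} (α : Word P) (x : H) :
    x ∈ Kset α ↔ ∀ n : ℕ,
      ((((α.reverse.map fun y => ((y.2 : H))⁻¹ * (y.1 : H)).take n).prod)⁻¹ * x ∈ P) := by
  constructor
  · intro hx n
    exact Set.mem_iInter₂.mp hx _ ⟨n, rfl⟩
  · intro hx
    apply Set.mem_iInter₂.mpr
    rintro g ⟨n, rfl⟩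
    exact hx n

end

/-- If `γ : H → G` is a group homomorphism injective on the submonoid `P` of `H`, then for
every word `α` in `P`: (1) if `γ(α̇) = e` in `G` but `α̇ ≠ e` in `H`, then `K(α) = ∅`; and
(2) `γ(K(α))` is the constructible ideal of the submonoid `γ(P)` of `G` associated with the
image word `(γ(p₁), …, γ(p_{2k}))`. -/
theorem statement5 {H G : Type*} [Group H] [Group G] (P : Submonoid H) (γ : H →* G)
    (hinj : Set.InjOn γ (P : Set H)) (α : Word P) :
    (γ (dotProd α) = 1 → dotProd α ≠ 1 → Kset α = ∅) ∧
    γ '' Kset α = Kset (mapWord γ α) := by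
  classical
  set L : List H := α.reverse.map (fun y => ((y.2 : H))⁻¹ * (y.1 : H)) with hLdef
  have hLmem : ∀ a ∈ L, ∃ b ∈ P, ∃ c ∈ P, a = b⁻¹ * c := by
    intro a ha
    rw [hLdef, List.mem_map] at ha
    obtain ⟨y, -, rfl⟩ := ha
    exact ⟨y.2, y.2.2, y.1, y.1.2, rfl⟩
  have hmap : ((mapWord γ α).reverse.map fun y => ((y.2 : G))⁻¹ * (y.1 : G))
      = L.map γ := by
    rw [hLdef]
    simp [mapWord, memMap, List.map_reverse, List.map_map, Function.comp_def]
  have hmemKγ : ∀ z : G, z ∈ Kset (mapWord γ α) ↔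
      ∀ n : ℕ, (γ ((L.take n).prod))⁻¹ * z ∈ P.map γ := by
    intro z
    rw [mem_Kset_iff, hmap]
    constructor
    · intro hz n
      have := hz n
      rwa [← List.map_take, ← map_list_prod] at this
    · intro hz n
      rw [← List.map_take, ← map_list_prod]
      exact hz n
  have hprodL : L.prod = (dotProd α)⁻¹ := by
    rw [hLdef, dotProd, List.prod_inv_reverse]
    congr 1
    simp [List.map_reverse, List.map_map, Function.comp_def, mul_inv_rev]
  constructor
  · intro hγ hne
    ext x
    simp only [Set.mem_empty_iff_false, iff_false]
    intro hx
    have hx' := (mem_Kset_iff α x).mp hx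
    have hx0 : x ∈ P := by simpa using hx' 0
    have hxl : dotProd α * x ∈ P := by
      have := hx' L.length
      rwa [← hLdef, List.take_length, hprodL, inv_inv] at this
    have : γ (dotProd α * x) = γ x := by rw [map_mul, hγ, one_mul]
    exact hne (by
      have := hinj hxl hx0 this
      exact mul_right_cancel (by rw [this, one_mul]))
  · ext z
    constructor
    · rintro ⟨x, hx, rfl⟩
      rw [hmemKγ]
      intro n
      rw [← map_inv, ← map_mul]
      exact Submonoid.mem_map_of_mem γ ((mem_Kset_iff α x).mp hx n)
    · intro hz
      have hz' := (hmemKγ z).mp hz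
      have hz0 : z ∈ P.map γ := by simpa using hz' 0
      obtain ⟨p, hp, rfl⟩ := Submonoid.mem_map.mp hz0
      refine ⟨p, ?_, rfl⟩
      rw [mem_Kset_iff]
      refine key_ind γ hinj L hLmem p hp ?_
      intro n
      rw [map_mul, map_inv]
      exact hz' n


end PaperToeplitz
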